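/- (Hilbert–Schmidt measure in region II.) For all real α, β with 5β/4 ≥ α + 1/2, every separable density matrix σ on ℂ³ ⊗ ℂ³ satisfies ‖σ − ρ_{α,β,0}‖ ≥ (√2/3)·(5β/4 − α − 1/2); in particular, if 5β/4 > α + 1/2 then ρ_{α,β,0} is not separable. -/

import Mathlib

open Matrix Complex
open scoped Matrix Kronecker ComplexOrder

noncomputable section

/-- A density matrix: Hermitian, positive semidefinite, trace 1. -/
def IsDensityMatrix {n : Type*} [Fintype n] [DecidableEq n] (ρ : Matrix n n ℂ) : Prop :=
  ρ.IsHermitian ∧ ρ.PosSemidef ∧ ρ.trace = 1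

/-- A separable state on ℂ^d ⊗ ℂ^d : a finite convex combination of Kronecker
products of density matrices. -/
def IsSepState {d : ℕ} (ρ : Matrix (Fin d × Fin d) (Fin d × Fin d) ℂ) : Prop :=
  ∃ (K : ℕ) (p : Fin K → ℝ) (ρ₁ ρ₂ : Fin K → Matrix (Fin d) (Fin d) ℂ),
    (∀ k, 0 ≤ p k) ∧ (∑ k, p k = 1) ∧
    (∀ k, IsDensityMatrix (ρ₁ k)) ∧ (∀ k, IsDensityMatrix (ρ₂ k)) ∧
    ρ = ∑ k, (p k : ℂ) • (ρ₁ k ⊗ₖ ρ₂ k)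

/-- Hilbert–Schmidt inner product ⟨A,B⟩ = Tr(A†B). -/
def hsInner {n : Type*} [Fintype n] (A B : Matrix n n ℂ) : ℂ := (Aᴴ * B).trace

/-- Hilbert–Schmidt (Frobenius) norm ‖A‖ = √Tr(A†A). -/
def hsNorm {n : Type*} [Fintype n] (A : Matrix n n ℂ) : ℝ :=
  Real.sqrt ((Aᴴ * A).trace.re)

/-- The Weyl operator U_{nm} on ℂ^d: (U_{nm})_{k,l} = exp(2πi k n / d) if l = (k+m) mod d. -/
def weyl (d : ℕ) (n m : Fin d) : Matrix (Fin d) (Fin d) ℂ :=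
  Matrix.of fun k l =>
    if l = k + m then Complex.exp (2 * Real.pi * Complex.I * k.val * n.val / d) else 0

/-- The maximally entangled two-qutrit vector |φ⁺₃⟩. -/
def phiPlus3 : (Fin 3 × Fin 3) → ℂ :=
  fun p => if p.1 = p.2 then ((1 / Real.sqrt 3 : ℝ) : ℂ) else 0

/-- The projector |φ⁺₃⟩⟨φ⁺₃|. -/
def projPhiPlus3 : Matrix (Fin 3 × Fin 3) (Fin 3 × Fin 3) ℂ :=
  vecMulVec phiPlus3 (star phiPlus3)

/-- The two-qutrit Bell projectors P_{nm}. -/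
def bellP (n m : Fin 3) : Matrix (Fin 3 × Fin 3) (Fin 3 × Fin 3) ℂ :=
  (weyl 3 n m ⊗ₖ (1 : Matrix (Fin 3) (Fin 3) ℂ)) * projPhiPlus3 *
    (weyl 3 n m ⊗ₖ (1 : Matrix (Fin 3) (Fin 3) ℂ))ᴴ

/-- The three-parameter family of two-qutrit states ρ_{α,β,γ}. -/
def rhoFam (α β γ : ℝ) : Matrix (Fin 3 × Fin 3) (Fin 3 × Fin 3) ℂ :=
  (((1 - α - β - γ) / 9 : ℝ) : ℂ) • (1 : Matrix (Fin 3 × Fin 3) (Fin 3 × Fin 3) ℂ) +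
    (α : ℂ) • bellP 0 0 + ((β / 2 : ℝ) : ℂ) • (bellP 1 0 + bellP 2 0) +
    ((γ / 3 : ℝ) : ℂ) • (bellP 0 1 + bellP 1 1 + bellP 2 1)

/-- The operator U₁. -/
def opU1 : Matrix (Fin 3 × Fin 3) (Fin 3 × Fin 3) ℂ :=
  weyl 3 0 1 ⊗ₖ weyl 3 0 1 + weyl 3 0 2 ⊗ₖ weyl 3 0 2 + weyl 3 1 1 ⊗ₖ weyl 3 2 1 +
    weyl 3 1 2 ⊗ₖ weyl 3 2 2 + weyl 3 2 1 ⊗ₖ weyl 3 1 1 + weyl 3 2 2 ⊗ₖ weyl 3 1 2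

/-- The operator U₂ᴵ. -/
def opU2I : Matrix (Fin 3 × Fin 3) (Fin 3 × Fin 3) ℂ := weyl 3 1 0 ⊗ₖ weyl 3 2 0

/-- The operator U₂ᴵᴵ. -/
def opU2II : Matrix (Fin 3 × Fin 3) (Fin 3 × Fin 3) ℂ := weyl 3 2 0 ⊗ₖ weyl 3 1 0

/-- The operator U₂ = U₂ᴵ + U₂ᴵᴵ. -/
def opU2 : Matrix (Fin 3 × Fin 3) (Fin 3 × Fin 3) ℂ := opU2I + opU2II

/-- σ₊ = (1/3)(|01⟩⟨01| + |12⟩⟨12| + |20⟩⟨20|). -/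
def sigmaPlus : Matrix (Fin 3 × Fin 3) (Fin 3 × Fin 3) ℂ :=
  (1 / 3 : ℂ) • Matrix.diagonal (fun p => if p.2 = p.1 + 1 then 1 else 0)

/-- σ₋ = (1/3)(|10⟩⟨10| + |21⟩⟨21| + |02⟩⟨02|). -/
def sigmaMinus : Matrix (Fin 3 × Fin 3) (Fin 3 × Fin 3) ℂ :=
  (1 / 3 : ℂ) • Matrix.diagonal (fun p => if p.1 = p.2 + 1 then 1 else 0)

/-- The Horodecki states ρ_b. -/
def horodecki (b : ℝ) : Matrix (Fin 3 × Fin 3) (Fin 3 × Fin 3) ℂ :=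
  (2 / 7 : ℂ) • projPhiPlus3 + ((b / 7 : ℝ) : ℂ) • sigmaPlus +
    (((5 - b) / 7 : ℝ) : ℂ) • sigmaMinus

/-- Partial transpose in the second subsystem. -/
def ptB (ρ : Matrix (Fin 3 × Fin 3) (Fin 3 × Fin 3) ℂ) :
    Matrix (Fin 3 × Fin 3) (Fin 3 × Fin 3) ℂ :=
  Matrix.of fun p q => ρ (p.1, q.2) (q.1, p.2)

def omg : ℂ := Complex.exp (2 * Real.pi * Complex.I / 3)

lemma omg_pow3 : omg ^ 3 = 1 := by
  rw [omg, ← Complex.exp_nat_mul]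
  rw [show ((3:ℕ):ℂ) * (2 * Real.pi * Complex.I / 3) = 2 * Real.pi * Complex.I by push_cast; ring]
  exact Complex.exp_two_pi_mul_I

lemma omg_ne_zero : omg ≠ 0 := Complex.exp_ne_zero _

lemma omg_conj : (starRingEnd ℂ) omg = omg ^ 2 := by
  have h1 : omg * (starRingEnd ℂ) omg = 1 := by
    rw [Complex.mul_conj]
    norm_cast
    rw [Complex.normSq_eq_norm_sq, omg, Complex.norm_exp]
    rw [show (2 * Real.pi * Complex.I / 3).re = 0 by simp [Complex.div_re]]
    simp
  have h2 : omg * omg ^ 2 = 1 := by rw [← omg_pow3]; ring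
  exact mul_left_cancel₀ omg_ne_zero (h1.trans h2.symm)

lemma omg_sum : 1 + omg + omg ^ 2 = 0 := by
  have hne : omg ≠ 1 := by
    intro hh
    have him : omg.im = Real.sin (2 * Real.pi / 3) := by
      rw [omg, show 2 * (Real.pi:ℂ) * Complex.I / 3 = ((2 * Real.pi / 3 : ℝ):ℂ) * Complex.I by push_cast; ring]
      exact Complex.exp_ofReal_mul_I_im _
    have : Real.sin (2 * Real.pi / 3) > 0 := by
      apply Real.sin_pos_of_pos_of_lt_pi <;> nlinarith [Real.pi_pos]
    rw [hh] at him
    simp at him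
    linarith
  have h0 : (omg - 1) * (1 + omg + omg ^ 2) = 0 := by
    have := omg_pow3; linear_combination this - (1:ℂ)
  rcases mul_eq_zero.mp h0 with h | h
  · exact absurd (sub_eq_zero.mp h) hne
  · exact h

-- sandwich lemma
lemma sandwich {T : Type*} [Fintype T] (A : Matrix T T ℂ) (v : T → ℂ) :
    A * vecMulVec v (star v) * Aᴴ = vecMulVec (A *ᵥ v) (star (A *ᵥ v)) := by
  ext p q
  simp only [Matrix.mul_apply, Matrix.vecMulVec_apply, Matrix.conjTranspose_apply,
    Matrix.mulVec, dotProduct, Pi.star_apply, star_sum, star_mul',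
    Finset.sum_mul, Finset.mul_sum]
  exact Finset.sum_congr rfl fun r _ => Finset.sum_congr rfl fun s _ => by ring

lemma exp_omg1 (n : Fin 3) :
    Complex.exp (2 * (Real.pi:ℂ) * Complex.I * ((n.val : ℕ) : ℂ) / 3) = omg ^ (n.val) := by
  rw [show (2 * (Real.pi:ℂ) * Complex.I * ((n.val : ℕ) : ℂ) / 3) =
      ((n.val : ℕ) : ℂ) * (2 * Real.pi * Complex.I / 3) by push_cast; ring,
    Complex.exp_nat_mul, omg]

lemma exp_omg2 (n : Fin 3) :
    Complex.exp (2 * (Real.pi:ℂ) * Complex.I * 2 * ((n.val : ℕ) : ℂ) / 3) = omg ^ (2 * n.val) := by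
  rw [show (2 * (Real.pi:ℂ) * Complex.I * 2 * ((n.val : ℕ) : ℂ) / 3) =
      ((2 * n.val : ℕ) : ℂ) * (2 * Real.pi * Complex.I / 3) by push_cast; ring,
    Complex.exp_nat_mul, omg]

lemma wvec (n : Fin 3) :
    (weyl 3 n 0 ⊗ₖ (1 : Matrix (Fin 3) (Fin 3) ℂ)) *ᵥ phiPlus3 =
      fun p => if p.1 = p.2 then omg ^ (p.1.val * n.val) * ((1 / Real.sqrt 3 : ℝ) : ℂ) else 0 := by
  funext p
  obtain ⟨j, j'⟩ := p
  simp only [Matrix.mulVec, dotProduct, Fintype.sum_prod_type, weyl, phiPlus3,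
    Matrix.kroneckerMap_apply, Matrix.one_apply, Matrix.of_apply]
  fin_cases j <;> fin_cases j' <;>
    simp [Fin.sum_univ_three, exp_omg1 n, exp_omg2 n]

lemma bell_apply (n : Fin 3) (p q : Fin 3 × Fin 3) :
    bellP n 0 p q = (if p.1 = p.2 then omg ^ (p.1.val * n.val) else 0) *
      (starRingEnd ℂ) (if q.1 = q.2 then omg ^ (q.1.val * n.val) else 0) / 3 := by
  rw [bellP, projPhiPlus3, sandwich, wvec]
  simp only [Matrix.vecMulVec_apply, Pi.star_apply]
  have hc : ((1 / Real.sqrt 3 : ℝ) : ℂ) * ((1 / Real.sqrt 3 : ℝ) : ℂ) = 1/3 := by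
    norm_cast
    rw [div_mul_div_comm, one_mul, Real.mul_self_sqrt (by norm_num)]
    norm_num
  generalize omg ^ (p.1.val * n.val) = u
  generalize omg ^ (q.1.val * n.val) = v
  by_cases hp : p.1 = p.2 <;> by_cases hq : q.1 = q.2 <;>
    simp only [hp, hq, if_true, if_false, star_mul', map_zero, star_zero, zero_mul,
      mul_zero, zero_div, Complex.star_def, Complex.conj_ofReal]
  linear_combination u * (starRingEnd ℂ) v * hc


lemma omg_pow_add3 (m : ℕ) : omg ^ (m + 3) = omg ^ m := by
  have h := omg_pow3
  rw [pow_add, h, mul_one]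

lemma omg_sum' : 1 + omg + omg ^ 2 = 0 := omg_sum

def Pz : Matrix (Fin 3 × Fin 3) (Fin 3 × Fin 3) ℂ :=
  Matrix.of fun p q => if p.1 = p.2 ∧ q.1 = q.2 then (1/3 : ℂ) else 0

def Qz : Matrix (Fin 3 × Fin 3) (Fin 3 × Fin 3) ℂ :=
  Matrix.of fun p q => if p = q ∧ p.1 = p.2 then (1:ℂ) else 0

lemma hbell0 : bellP 0 0 = Pz := by
  ext p q
  rw [bell_apply]
  simp only [Pz, Matrix.of_apply, Fin.val_zero, Nat.mul_zero, pow_zero, mul_zero]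
  by_cases hp : p.1 = p.2 <;> by_cases hq : q.1 = q.2 <;> simp [hp, hq]

lemma hbell12 : bellP 1 0 + bellP 2 0 = Qz - Pz := by
  ext p q
  rw [Matrix.add_apply, bell_apply, bell_apply]
  obtain ⟨j, j'⟩ := p
  obtain ⟨k, k'⟩ := q
  simp only [Qz, Pz, Matrix.sub_apply, Matrix.of_apply]
  by_cases hp : (j, j').1 = (j, j').2 <;> by_cases hq : (k, k').1 = (k, k').2
  · simp only at hp hq
    subst hp; subst hq
    simp only [Prod.mk.injEq, and_self, and_true, if_true, eq_self_iff_true]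
    fin_cases j <;> fin_cases k
    · simp only [map_pow, omg_conj, ← pow_mul]
      norm_num [Fin.ext_iff]
    · simp only [map_pow, omg_conj, ← pow_mul]
      norm_num [Fin.ext_iff]
      first
        | linear_combination (1/3)*omg_sum + (omg/3)*omg_pow3
        | linear_combination 3*((1/3)*omg_sum + (omg/3)*omg_pow3)
    · simp only [map_pow, omg_conj, ← pow_mul]
      norm_num [Fin.ext_iff]
      first
        | linear_combination (1/3)*omg_sum + ((omg + omg^2*(omg^3+1))/3)*omg_pow3
        | linear_combination 3*((1/3)*omg_sum + ((omg + omg^2*(omg^3+1))/3)*omg_pow3)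
    · simp only [map_pow, omg_conj, ← pow_mul]
      norm_num [Fin.ext_iff]
      first
        | linear_combination (1/3)*omg_sum
        | linear_combination 3*((1/3)*omg_sum)
    · simp only [map_pow, omg_conj, ← pow_mul]
      norm_num [Fin.ext_iff]
      first
        | linear_combination ((omg^3+2)/3)*omg_pow3
        | linear_combination 3*(((omg^3+2)/3)*omg_pow3)
    · simp only [map_pow, omg_conj, ← pow_mul]
      norm_num [Fin.ext_iff]
      first
        | linear_combination (1/3)*omg_sum + ((omg^2 + omg*(omg^6+omg^3+1))/3)*omg_pow3
        | linear_combination 3*((1/3)*omg_sum + ((omg^2 + omg*(omg^6+omg^3+1))/3)*omg_pow3)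
    · simp only [map_pow, omg_conj, ← pow_mul]
      norm_num [Fin.ext_iff]
      first
        | linear_combination (1/3)*omg_sum + (omg/3)*omg_pow3
        | linear_combination 3*((1/3)*omg_sum + (omg/3)*omg_pow3)
    · simp only [map_pow, omg_conj, ← pow_mul]
      norm_num [Fin.ext_iff]
      first
        | linear_combination (1/3)*omg_sum + ((omg + omg^2*(omg^3+1))/3)*omg_pow3
        | linear_combination 3*((1/3)*omg_sum + ((omg + omg^2*(omg^3+1))/3)*omg_pow3)
    · simp only [map_pow, omg_conj, ← pow_mul]
      norm_num [Fin.ext_iff]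
      first
        | linear_combination (((omg^3+1) + (omg^3+1)*(omg^6+1))/3)*omg_pow3
        | linear_combination 3*((((omg^3+1) + (omg^3+1)*(omg^6+1))/3)*omg_pow3)

  · simp only at hp hq
    have hcond : ¬((j, j') = (k, k') ∧ j = j') := by
      rintro ⟨h1, h2⟩
      rw [Prod.mk.injEq] at h1
      exact hq (h1.1.symm.trans (h2.trans h1.2))
    simp [hp, hq, hcond]
    intro h1 h2
    exact hq (h1.symm.trans h2)
  · simp only at hp hq
    simp [hp]
  · simp only at hp hq
    simp [hp]

lemma hsInner_eq {n : Type*} [Fintype n] (A B : Matrix n n ℂ) :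
    hsInner A B = ∑ j, ∑ i, (starRingEnd ℂ) (A i j) * B i j := by
  simp [hsInner, Matrix.trace, Matrix.mul_apply, Matrix.conjTranspose_apply, Matrix.diag]

lemma hsNorm_sq {n : Type*} [Fintype n] (A : Matrix n n ℂ) :
    (Aᴴ * A).trace.re = ∑ j, ∑ i, ‖A i j‖ ^ 2 := by
  have : (Aᴴ * A).trace = ((∑ j, ∑ i, ‖A i j‖ ^ 2 : ℝ) : ℂ) := by
    push_cast
    simp only [Matrix.trace, Matrix.mul_apply, Matrix.conjTranspose_apply, Matrix.diag]
    refine Finset.sum_congr rfl fun j _ => Finset.sum_congr rfl fun i _ => ?_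
    rw [Complex.star_def, mul_comm, Complex.mul_conj]
    norm_cast
    rw [Complex.sq_norm]
  rw [this, Complex.ofReal_re]

lemma hsNorm_nonneg {n : Type*} [Fintype n] (A : Matrix n n ℂ) : 0 ≤ hsNorm A :=
  Real.sqrt_nonneg _

lemma hs_cs {n : Type*} [Fintype n] (A B : Matrix n n ℂ) :
    (hsInner A B).re ≤ hsNorm A * hsNorm B := by
  rw [hsInner_eq, hsNorm, hsNorm, hsNorm_sq, hsNorm_sq]
  have h1 : (∑ j, ∑ i, (starRingEnd ℂ) (A i j) * B i j).re
      = ∑ j, ∑ i, ((starRingEnd ℂ) (A i j) * B i j).re := by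
    rw [Complex.re_sum]
    exact Finset.sum_congr rfl fun j _ => Complex.re_sum _ _
  rw [h1]
  have h2 : ∑ j, ∑ i, ((starRingEnd ℂ) (A i j) * B i j).re
      ≤ ∑ j : n, ∑ i : n, ‖A i j‖ * ‖B i j‖ := by
    refine Finset.sum_le_sum fun j _ => Finset.sum_le_sum fun i _ => ?_
    calc ((starRingEnd ℂ) (A i j) * B i j).re ≤ ‖(starRingEnd ℂ) (A i j) * B i j‖ :=
          Complex.re_le_norm _
      _ = ‖A i j‖ * ‖B i j‖ := by
          rw [norm_mul, Complex.norm_conj]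
  refine h2.trans ?_
  have h3 : ∑ j : n, ∑ i : n, ‖A i j‖ * ‖B i j‖
      = ∑ x : n × n, ‖A x.2 x.1‖ * ‖B x.2 x.1‖ :=
    (Fintype.sum_prod_type (fun x : n × n => ‖A x.2 x.1‖ * ‖B x.2 x.1‖)).symm
  have h4 : ∑ j : n, ∑ i : n, ‖A i j‖ ^ 2
      = ∑ x : n × n, ‖A x.2 x.1‖ ^ 2 :=
    (Fintype.sum_prod_type (fun x : n × n => ‖A x.2 x.1‖ ^ 2)).symm
  have h5 : ∑ j : n, ∑ i : n, ‖B i j‖ ^ 2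
      = ∑ x : n × n, ‖B x.2 x.1‖ ^ 2 :=
    (Fintype.sum_prod_type (fun x : n × n => ‖B x.2 x.1‖ ^ 2)).symm
  rw [h3, h4, h5]
  exact Real.sum_mul_le_sqrt_mul_sqrt _ _ _

lemma psd_diag_im {a : Matrix (Fin 3) (Fin 3) ℂ} (ha : a.PosSemidef) (j : Fin 3) :
    (a j j).im = 0 := by
  have h := congrFun (congrFun ha.isHermitian j) j
  rw [Matrix.conjTranspose_apply] at h
  exact Complex.conj_eq_iff_im.mp h

lemma psd_diag_re {a : Matrix (Fin 3) (Fin 3) ℂ} (ha : a.PosSemidef) (j : Fin 3) :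
    0 ≤ (a j j).re := by
  have h := ha.re_dotProduct_nonneg (Pi.single j 1)
  simpa [dotProduct, Matrix.mulVec, Pi.single_apply, Finset.mul_sum, apply_ite] using h

lemma psd_offdiag {a : Matrix (Fin 3) (Fin 3) ℂ} (ha : a.PosSemidef) (j k : Fin 3) : ‖a j k‖ ^ 2 ≤ (a j j).re * (a k k).re := by
  by_cases hz : a j k = 0
  · simpa [hz] using mul_nonneg (psd_diag_re ha j) (psd_diag_re ha k)
  · set r := ‖a j k‖ with hr
    have hrpos : 0 < r := (norm_pos_iff).mpr hz
    have hrne : (r : ℂ) ≠ 0 := by exact_mod_cast hrpos.ne'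
    set w : ℂ := -((starRingEnd ℂ) (a j k)) / r with hw
    have hherm : a k j = (starRingEnd ℂ) (a j k) := by
      have h := congrFun (congrFun ha.isHermitian k) j
      rw [Matrix.conjTranspose_apply] at h
      exact h.symm
    have hns : (a j k) * (starRingEnd ℂ) (a j k) = ((r : ℂ))^2 := by
      rw [Complex.mul_conj, hr]
      norm_cast
      exact (Complex.sq_norm _).symm
    have f1 : a j k * w = -(r : ℂ) := by
      rw [hw]
      field_simp
      linear_combination (-1 : ℂ) * hns
    have f2 : (starRingEnd ℂ) w * a k j = -(r : ℂ) := by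
      rw [hherm, hw, map_div₀, map_neg, Complex.conj_conj, Complex.conj_ofReal]
      field_simp
      linear_combination (-1 : ℂ) * hns
    have f3 : (starRingEnd ℂ) w * w = 1 := by
      rw [hw, map_div₀, map_neg, Complex.conj_conj, Complex.conj_ofReal]
      field_simp
      linear_combination hns
    have key : ∀ t : ℝ, 0 ≤ (a j j).re * (t * t) + (-(2 * r)) * t + (a k k).re := by
      intro t
      set x : Fin 3 → ℂ := Pi.single j (t : ℂ) + Pi.single k w with hx
      have h := ha.re_dotProduct_nonneg x
      have hsing : ∀ (i : Fin 3) (c : ℂ),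
          star (Pi.single i c : Fin 3 → ℂ) = Pi.single i ((starRingEnd ℂ) c) := by
        intro i c
        funext l
        by_cases hl : l = i
        · subst hl; simp
        · simp [Pi.single_apply, hl]
      have hxval : star x ⬝ᵥ a *ᵥ x
          = (t : ℂ) * (a j j * t + a j k * w)
            + (starRingEnd ℂ) w * (a k j * t + a k k * w) := by
        rw [hx, star_add, hsing, hsing, Matrix.mulVec_add, add_dotProduct,
          single_dotProduct, single_dotProduct]
        simp only [Matrix.mulVec_single, Pi.add_apply, Complex.conj_ofReal, Pi.smul_apply,
          Matrix.col_apply, op_smul_eq_mul]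
        try ring
      have hE : star x ⬝ᵥ a *ᵥ x
          = ((t^2 : ℝ) : ℂ) * a j j - ((2*r*t : ℝ) : ℂ) + a k k := by
        rw [hxval]
        push_cast
        linear_combination (t : ℂ) * f1 + (t : ℂ) * f2 + (a k k) * f3
      rw [hE] at h
      simp only [RCLike.re_to_complex, Complex.add_re, Complex.sub_re,
        Complex.re_ofReal_mul, Complex.ofReal_re] at h
      nlinarith [h]
    have hd := discrim_le_zero key
    rw [discrim] at hd
    nlinarith [hd]

def Wz : Matrix (Fin 3 × Fin 3) (Fin 3 × Fin 3) ℂ :=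
  (2:ℂ) • Qz - (3:ℂ) • Pz - (1/3 : ℂ) • 1

lemma Pz_herm : Pzᴴ = Pz := by
  ext p q
  simp only [Matrix.conjTranspose_apply, Pz, Matrix.of_apply, apply_ite, map_zero]
  by_cases h1 : p.1 = p.2 <;> by_cases h2 : q.1 = q.2 <;> simp [h1, h2, and_comm]

lemma Qz_herm : Qzᴴ = Qz := by
  ext p q
  simp only [Matrix.conjTranspose_apply, Qz, Matrix.of_apply, apply_ite, map_zero, _root_.map_one]
  by_cases h1 : p = q
  · subst h1; simp
  · simp [h1, (fun h => h1 h.symm : ¬ q = p)]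
    exact fun h => absurd h.symm h1
  
lemma Wz_herm : Wzᴴ = Wz := by
  simp [Wz, Matrix.conjTranspose_sub, Matrix.conjTranspose_smul, Pz_herm, Qz_herm]

lemma tr_Pz : Pz.trace = 1 := by
  simp only [Matrix.trace, Matrix.diag, Pz, Fintype.sum_prod_type, Fin.sum_univ_three, Matrix.of_apply]
  norm_num [Prod.ext_iff, Fin.ext_iff]

lemma tr_Qz : Qz.trace = 3 := by
  simp only [Matrix.trace, Matrix.diag, Qz, Fintype.sum_prod_type, Fin.sum_univ_three, Matrix.of_apply]
  norm_num [Prod.ext_iff, Fin.ext_iff]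

lemma tr_PzPz : (Pz * Pz).trace = 1 := by
  simp only [Matrix.trace, Matrix.diag, Matrix.mul_apply, Pz, Fintype.sum_prod_type, Fin.sum_univ_three, Matrix.of_apply]
  norm_num [Prod.ext_iff, Fin.ext_iff]

lemma tr_QzPz : (Qz * Pz).trace = 1 := by
  simp only [Matrix.trace, Matrix.diag, Matrix.mul_apply, Pz, Qz, Fintype.sum_prod_type, Fin.sum_univ_three, Matrix.of_apply]
  norm_num [Prod.ext_iff, Fin.ext_iff]

lemma tr_PzQz : (Pz * Qz).trace = 1 := by
  simp only [Matrix.trace, Matrix.diag, Matrix.mul_apply, Pz, Qz, Fintype.sum_prod_type, Fin.sum_univ_three, Matrix.of_apply]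
  norm_num [Prod.ext_iff, Fin.ext_iff]

lemma tr_QzQz : (Qz * Qz).trace = 3 := by
  simp only [Matrix.trace, Matrix.diag, Matrix.mul_apply, Qz, Fintype.sum_prod_type, Fin.sum_univ_three, Matrix.of_apply]
  norm_num [Prod.ext_iff, Fin.ext_iff]

lemma tr_one9 : (1 : Matrix (Fin 3 × Fin 3) (Fin 3 × Fin 3) ℂ).trace = 9 := by
  rw [Matrix.trace_one]
  simp


lemma trQX (a b : Matrix (Fin 3) (Fin 3) ℂ) :
    (Qz * (a ⊗ₖ b)).trace = a 0 0 * b 0 0 + a 1 1 * b 1 1 + a 2 2 * b 2 2 := by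
  simp only [Matrix.trace, Matrix.diag, Matrix.mul_apply, Qz, Matrix.of_apply,
    Matrix.kroneckerMap_apply, Fintype.sum_prod_type, Fin.sum_univ_three]
  norm_num [Prod.ext_iff, Fin.ext_iff]

lemma trPX (a b : Matrix (Fin 3) (Fin 3) ℂ) :
    (Pz * (a ⊗ₖ b)).trace = (∑ j, ∑ k, a j k * b j k) / 3 := by
  simp only [Matrix.trace, Matrix.diag, Matrix.mul_apply, Pz, Matrix.of_apply,
    Matrix.kroneckerMap_apply, Fintype.sum_prod_type, Fin.sum_univ_three]
  norm_num [Prod.ext_iff, Fin.ext_iff]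
  ring

lemma hsInnerW_prod (a b : Matrix (Fin 3) (Fin 3) ℂ) (hta : a.trace = 1) (htb : b.trace = 1) :
    hsInner Wz (a ⊗ₖ b) = 2 * (a 0 0 * b 0 0 + a 1 1 * b 1 1 + a 2 2 * b 2 2)
      - (∑ j, ∑ k, a j k * b j k) - 1/3 := by
  rw [hsInner, Wz_herm, Wz]
  rw [Matrix.sub_mul, Matrix.sub_mul, Matrix.smul_mul, Matrix.smul_mul, Matrix.smul_mul,
    Matrix.trace_sub, Matrix.trace_sub, Matrix.trace_smul, Matrix.trace_smul, Matrix.trace_smul,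
    Matrix.one_mul, Matrix.trace_kronecker, hta, htb, trQX, trPX]
  simp only [smul_eq_mul]
  ring

lemma prod_bound (a b : Matrix (Fin 3) (Fin 3) ℂ)
    (ha : a.PosSemidef) (hta : a.trace = 1) (hb : b.PosSemidef) (htb : b.trace = 1) :
    (hsInner Wz (a ⊗ₖ b)).re ≤ 2/3 := by
  have hA : ∀ j, 0 ≤ (a j j).re := psd_diag_re ha
  have hB : ∀ j, 0 ≤ (b j j).re := psd_diag_re hb
  have hdre : ∀ j : Fin 3, (a j j * b j j).re = (a j j).re * (b j j).re := by
    intro j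
    rw [Complex.mul_re, psd_diag_im ha, psd_diag_im hb, zero_mul, sub_zero]
  have hsumA : (a 0 0).re + (a 1 1).re + (a 2 2).re = 1 := by
    have h1 : a.trace = 1 := hta
    rw [Matrix.trace, Fin.sum_univ_three] at h1
    have := congrArg Complex.re h1
    simpa [Matrix.diag] using this
  have hsumB : (b 0 0).re + (b 1 1).re + (b 2 2).re = 1 := by
    have h1 : b.trace = 1 := htb
    rw [Matrix.trace, Fin.sum_univ_three] at h1
    have := congrArg Complex.re h1
    simpa [Matrix.diag] using this
  have cross : ∀ j k : Fin 3, -((a j k) * (b j k)).re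
      ≤ Real.sqrt ((a j j).re * (b j j).re) * Real.sqrt ((a k k).re * (b k k).re) := by
    intro j k
    have h1 : -((a j k) * (b j k)).re ≤ ‖a j k‖ * ‖b j k‖ := by
      have h2 := Complex.abs_re_le_norm ((a j k) * (b j k))
      rw [norm_mul] at h2
      have h3 := abs_le.mp h2
      linarith [h3.1]
    refine h1.trans ?_
    have ha' : ‖a j k‖ ≤ Real.sqrt ((a j j).re * (a k k).re) := by
      rw [show ‖a j k‖ = Real.sqrt (‖a j k‖ ^ 2) by
        rw [Real.sqrt_sq (norm_nonneg _)]]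
      exact Real.sqrt_le_sqrt (psd_offdiag ha j k)
    have hb' : ‖b j k‖ ≤ Real.sqrt ((b j j).re * (b k k).re) := by
      rw [show ‖b j k‖ = Real.sqrt (‖b j k‖ ^ 2) by
        rw [Real.sqrt_sq (norm_nonneg _)]]
      exact Real.sqrt_le_sqrt (psd_offdiag hb j k)
    calc ‖a j k‖ * ‖b j k‖
        ≤ Real.sqrt ((a j j).re * (a k k).re) * Real.sqrt ((b j j).re * (b k k).re) :=
          mul_le_mul ha' hb' (norm_nonneg _) (Real.sqrt_nonneg _)
      _ = Real.sqrt ((a j j).re * (b j j).re) * Real.sqrt ((a k k).re * (b k k).re) := by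
          rw [← Real.sqrt_mul (mul_nonneg (hA j) (hA k)),
            ← Real.sqrt_mul (mul_nonneg (hA j) (hB j))]
          ring_nf
  have hxsq : ∀ j : Fin 3, (Real.sqrt ((a j j).re * (b j j).re)) ^ 2
      = (a j j).re * (b j j).re := fun j => Real.sq_sqrt (mul_nonneg (hA j) (hB j))
  have hxn : ∀ j : Fin 3, 0 ≤ Real.sqrt ((a j j).re * (b j j).re) :=
    fun j => Real.sqrt_nonneg _
  have hcs : Real.sqrt ((a 0 0).re * (b 0 0).re) + Real.sqrt ((a 1 1).re * (b 1 1).re)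
      + Real.sqrt ((a 2 2).re * (b 2 2).re) ≤ 1 := by
    have h := Real.sum_sqrt_mul_sqrt_le (Finset.univ : Finset (Fin 3))
      (f := fun j => (a j j).re) (g := fun j => (b j j).re) hA hB
    rw [Fin.sum_univ_three, Fin.sum_univ_three, Fin.sum_univ_three, hsumA, hsumB] at h
    simp only [Real.sqrt_one, mul_one] at h
    calc Real.sqrt ((a 0 0).re * (b 0 0).re) + Real.sqrt ((a 1 1).re * (b 1 1).re)
        + Real.sqrt ((a 2 2).re * (b 2 2).re)
        = Real.sqrt (a 0 0).re * Real.sqrt (b 0 0).re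
          + Real.sqrt (a 1 1).re * Real.sqrt (b 1 1).re
          + Real.sqrt (a 2 2).re * Real.sqrt (b 2 2).re := by
          rw [Real.sqrt_mul (hA 0), Real.sqrt_mul (hA 1), Real.sqrt_mul (hA 2)]
      _ ≤ 1 := h
  have hsq : (Real.sqrt ((a 0 0).re * (b 0 0).re) + Real.sqrt ((a 1 1).re * (b 1 1).re)
      + Real.sqrt ((a 2 2).re * (b 2 2).re)) ^ 2 ≤ 1 := by
    nlinarith [hcs, hxn 0, hxn 1, hxn 2]
  rw [hsInnerW_prod a b hta htb]
  have hre2 : ∀ u v w : ℂ, (2 * u - v - w).re = 2 * u.re - v.re - w.re := by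
    intro u v w
    simp [Complex.sub_re, Complex.mul_re]
  rw [hre2]
  have hresum : (∑ j, ∑ k, a j k * b j k).re = ∑ j : Fin 3, ∑ k : Fin 3, (a j k * b j k).re := by
    rw [Complex.re_sum]
    exact Finset.sum_congr rfl fun j _ => Complex.re_sum _ _
  rw [hresum]
  simp only [Fin.sum_univ_three, Complex.add_re]
  norm_num [hdre 0, hdre 1, hdre 2]
  have hexp : (Real.sqrt ((a 0 0).re * (b 0 0).re) + Real.sqrt ((a 1 1).re * (b 1 1).re)
      + Real.sqrt ((a 2 2).re * (b 2 2).re)) ^ 2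
      = (Real.sqrt ((a 0 0).re * (b 0 0).re))^2 + (Real.sqrt ((a 1 1).re * (b 1 1).re))^2
        + (Real.sqrt ((a 2 2).re * (b 2 2).re))^2
        + 2*(Real.sqrt ((a 0 0).re * (b 0 0).re) * Real.sqrt ((a 1 1).re * (b 1 1).re))
        + 2*(Real.sqrt ((a 0 0).re * (b 0 0).re) * Real.sqrt ((a 2 2).re * (b 2 2).re))
        + 2*(Real.sqrt ((a 1 1).re * (b 1 1).re) * Real.sqrt ((a 2 2).re * (b 2 2).re)) := by
    ring
  have c01 := cross 0 1
  have c02 := cross 0 2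
  have c10 := cross 1 0
  have c12 := cross 1 2
  have c20 := cross 2 0
  have c21 := cross 2 1
  rw [Complex.mul_re] at c01 c02 c10 c12 c20 c21
  linarith [hsq, hexp, hxsq 0, hxsq 1, hxsq 2, c01, c02, c10, c12, c20, c21]

lemma tr_WQ : (Wz * Qz).trace = 2 := by
  rw [Wz, Matrix.sub_mul, Matrix.sub_mul, Matrix.smul_mul, Matrix.smul_mul, Matrix.smul_mul,
    Matrix.one_mul, Matrix.trace_sub, Matrix.trace_sub, Matrix.trace_smul, Matrix.trace_smul,
    Matrix.trace_smul, tr_QzQz, tr_PzQz, tr_Qz]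
  simp only [smul_eq_mul]
  norm_num

lemma tr_WP : (Wz * Pz).trace = -(4/3) := by
  rw [Wz, Matrix.sub_mul, Matrix.sub_mul, Matrix.smul_mul, Matrix.smul_mul, Matrix.smul_mul,
    Matrix.one_mul, Matrix.trace_sub, Matrix.trace_sub, Matrix.trace_smul, Matrix.trace_smul,
    Matrix.trace_smul, tr_QzPz, tr_PzPz, tr_Pz]
  simp only [smul_eq_mul]
  norm_num

lemma tr_W : Wz.trace = 0 := by
  rw [Wz, Matrix.trace_sub, Matrix.trace_sub, Matrix.trace_smul, Matrix.trace_smul,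
    Matrix.trace_smul, tr_Qz, tr_Pz, tr_one9]
  simp only [smul_eq_mul]
  norm_num

lemma tr_WW : (Wzᴴ * Wz).trace = 8 := by
  rw [Wz_herm]
  have h1 : Wz * Wz = (2:ℂ) • (Wz * Qz) - (3:ℂ) • (Wz * Pz) - (1/3:ℂ) • Wz := by
    conv_lhs => rw [show Wz * Wz = Wz * ((2:ℂ) • Qz - (3:ℂ) • Pz - (1/3 : ℂ) • 1) by rw [← Wz]]
    rw [Matrix.mul_sub, Matrix.mul_sub, Matrix.mul_smul, Matrix.mul_smul, Matrix.mul_smul,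
      Matrix.mul_one]
  rw [h1, Matrix.trace_sub, Matrix.trace_sub, Matrix.trace_smul, Matrix.trace_smul,
    Matrix.trace_smul, tr_WQ, tr_WP, tr_W]
  simp only [smul_eq_mul]
  norm_num

lemma hsNorm_Wz : hsNorm Wz = Real.sqrt 8 := by
  rw [hsNorm, tr_WW]
  norm_num

lemma hsNorm_sub_swap {n : Type*} [Fintype n] (A B : Matrix n n ℂ) :
    hsNorm (A - B) = hsNorm (B - A) := by
  rw [hsNorm, hsNorm, show A - B = -(B - A) by abel]
  rw [Matrix.conjTranspose_neg, Matrix.neg_mul, Matrix.mul_neg, neg_neg]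

lemma hsNorm_zero {n : Type*} [Fintype n] :
    hsNorm (0 : Matrix n n ℂ) = 0 := by
  simp [hsNorm]


lemma sep_bound (σ : Matrix (Fin 3 × Fin 3) (Fin 3 × Fin 3) ℂ) (hσ : IsSepState σ) :
    (hsInner Wz σ).re ≤ 2/3 := by
  obtain ⟨K, p, ρ1, ρ2, hp0, hp1, hd1, hd2, rfl⟩ := hσ
  have hlin : hsInner Wz (∑ k, (p k : ℂ) • (ρ1 k ⊗ₖ ρ2 k))
      = ∑ k, (p k : ℂ) * hsInner Wz (ρ1 k ⊗ₖ ρ2 k) := by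
    simp only [hsInner, Matrix.mul_sum, Matrix.mul_smul, Matrix.trace_sum, Matrix.trace_smul,
      smul_eq_mul]
  rw [hlin, Complex.re_sum]
  have hterm : ∀ k, ((p k : ℂ) * hsInner Wz (ρ1 k ⊗ₖ ρ2 k)).re ≤ p k * (2/3) := by
    intro k
    rw [Complex.re_ofReal_mul]
    exact mul_le_mul_of_nonneg_left
      (prod_bound (ρ1 k) (ρ2 k) (hd1 k).2.1 (hd1 k).2.2 (hd2 k).2.1 (hd2 k).2.2) (hp0 k)
  calc ∑ k, ((p k : ℂ) * hsInner Wz (ρ1 k ⊗ₖ ρ2 k)).re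
      ≤ ∑ k, p k * (2/3) := Finset.sum_le_sum fun k _ => hterm k
    _ = 2/3 := by rw [← Finset.sum_mul, hp1, one_mul]


lemma rho_eq (α β : ℝ) : rhoFam α β 0
    = (((1 - α - β) / 9 : ℝ) : ℂ) • (1 : Matrix (Fin 3 × Fin 3) (Fin 3 × Fin 3) ℂ)
      + (α : ℂ) • Pz + ((β / 2 : ℝ) : ℂ) • (Qz - Pz) := by
  rw [rhoFam, hbell0, hbell12]
  norm_num

lemma hsW_rho (α β : ℝ) :
    hsInner Wz (rhoFam α β 0) = ((5*β/3 - 4*α/3 : ℝ) : ℂ) := by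
  rw [hsInner, Wz_herm, rho_eq α β, Matrix.mul_add, Matrix.mul_add, Matrix.mul_smul,
    Matrix.mul_smul, Matrix.mul_smul, Matrix.trace_add, Matrix.trace_add, Matrix.trace_smul,
    Matrix.trace_smul, Matrix.trace_smul, Matrix.mul_one, Matrix.mul_sub, Matrix.trace_sub,
    tr_W, tr_WP, tr_WQ]
  simp only [smul_eq_mul]
  push_cast
  ring


/-- Hilbert–Schmidt measure in region II: every separable state is at distance at least
(√2/3)(5β/4 − α − 1/2) from ρ_{α,β,0}; strict inequality forces entanglement. -/
theorem stmt12 (α β : ℝ) (h : α + 1 / 2 ≤ 5 * β / 4) :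
    (∀ σ : Matrix (Fin 3 × Fin 3) (Fin 3 × Fin 3) ℂ, IsSepState σ →
      Real.sqrt 2 / 3 * (5 * β / 4 - α - 1 / 2) ≤ hsNorm (σ - rhoFam α β 0)) ∧
    (α + 1 / 2 < 5 * β / 4 → ¬ IsSepState (rhoFam α β 0)) := by
  have main : ∀ σ : Matrix (Fin 3 × Fin 3) (Fin 3 × Fin 3) ℂ, IsSepState σ →
      Real.sqrt 2 / 3 * (5 * β / 4 - α - 1 / 2) ≤ hsNorm (σ - rhoFam α β 0) := by
    intro σ hsep
    have h1 : (hsInner Wz σ).re ≤ 2/3 := sep_bound σ hsep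
    have h3 : hsInner Wz (rhoFam α β 0 - σ)
        = hsInner Wz (rhoFam α β 0) - hsInner Wz σ := by
      rw [hsInner, hsInner, hsInner, Matrix.mul_sub, Matrix.trace_sub]
    have h4 := hs_cs Wz (rhoFam α β 0 - σ)
    have h7 : (hsInner Wz (rhoFam α β 0 - σ)).re = (5*β/3 - 4*α/3) - (hsInner Wz σ).re := by
      rw [h3, Complex.sub_re, hsW_rho α β, Complex.ofReal_re]
    rw [h7, hsNorm_Wz, hsNorm_sub_swap] at h4
    have hs2 : Real.sqrt 8 = 2 * Real.sqrt 2 := by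
      rw [show (8:ℝ) = 2^2 * 2 by norm_num, Real.sqrt_mul (by positivity),
        Real.sqrt_sq (by norm_num)]
    rw [hs2] at h4
    have hN : 0 ≤ hsNorm (σ - rhoFam α β 0) := Real.sqrt_nonneg _
    have hsq2 : Real.sqrt 2 ^ 2 = 2 := Real.sq_sqrt (by norm_num)
    have hmul := mul_le_mul_of_nonneg_left h4 (Real.sqrt_nonneg 2)
    nlinarith [hmul, hsq2, hN, Real.sqrt_nonneg 2, h, h1]
  refine ⟨main, ?_⟩
  intro hlt hsep
  have h1 := main _ hsep
  rw [sub_self, hsNorm_zero] at h1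
  have h2 : 0 < Real.sqrt 2 := Real.sqrt_pos.mpr (by norm_num)
  nlinarith [h1, h2, hlt]

end
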